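/- Let P, Q be CDFs on ℝ of distributions supported in (−∞, V], with empirical versions based on samples: if P is the empirical CDF of points e_1,...,e_m and Q the empirical CDF of points g_1,...,g_m, all bounded above by V, then ∫_{−∞}^{V} (P(y) − Q(y))² dy = (1/m²) Σ_{j1,j2} (V − max(e_{j1}, e_{j2})) − (2/m²) Σ_{j1,j2} (V − max(e_{j1}, g_{j2})) + (1/m²) Σ_{j1,j2} (V − max(g_{j1}, g_{j2})). -/

import Mathlib

open MeasureTheory Finset

noncomputable def chi (a y : ℝ) : ℝ := if a ≤ y then 1 else 0

lemma prod_eq (a b y : ℝ) :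
    chi a y * chi b y = Set.indicator (Set.Ici (max a b)) (fun _ => (1:ℝ)) y := by
  simp only [chi, Set.indicator, Set.mem_Ici, max_le_iff]
  by_cases h1 : a ≤ y <;> by_cases h2 : b ≤ y <;> simp [h1, h2]

lemma intble (V a b : ℝ) : IntegrableOn (fun y => chi a y * chi b y) (Set.Iic V) := by
  simp only [prod_eq]
  rw [IntegrableOn, integrable_indicator_iff measurableSet_Ici, IntegrableOn,
    Measure.restrict_restrict measurableSet_Ici, Set.Ici_inter_Iic]
  exact integrableOn_const measure_Icc_lt_top.ne

lemma int_prod (V a b : ℝ) (ha : a ≤ V) (hb : b ≤ V) :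
    ∫ y in Set.Iic V, chi a y * chi b y = V - max a b := by
  simp_rw [prod_eq]
  rw [setIntegral_indicator measurableSet_Ici, Set.Iic_inter_Ici, setIntegral_const,
    measureReal_def, Real.volume_Icc, smul_eq_mul, mul_one,
    ENNReal.toReal_ofReal (by have := max_le ha hb; linarith)]
/-- Closed form of the 1-D empirical quadratic divergence: for empirical CDFs `P`, `Q` of
samples `e`, `g` bounded above by `V`,
`∫_{−∞}^{V} (P − Q)² = (1/m²) ΣΣ (V − max(e_{j₁}, e_{j₂})) − (2/m²) ΣΣ (V − max(e_{j₁}, g_{j₂}))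
+ (1/m²) ΣΣ (V − max(g_{j₁}, g_{j₂}))`. -/
theorem empirical_quadratic_divergence_closed_form
    (m : ℕ) (hm : 0 < m) (V : ℝ) (e g : Fin m → ℝ)
    (he : ∀ j, e j ≤ V) (hg : ∀ j, g j ≤ V)
    (P Q : ℝ → ℝ)
    (hP : ∀ y, P y = ((Finset.univ.filter (fun j => e j ≤ y)).card : ℝ) / m)
    (hQ : ∀ y, Q y = ((Finset.univ.filter (fun j => g j ≤ y)).card : ℝ) / m) :
    ∫ y in Set.Iic V, (P y - Q y) ^ 2
      = (1 / (m : ℝ) ^ 2) * ∑ j₁, ∑ j₂, (V - max (e j₁) (e j₂))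
        - (2 / (m : ℝ) ^ 2) * ∑ j₁, ∑ j₂, (V - max (e j₁) (g j₂))
        + (1 / (m : ℝ) ^ 2) * ∑ j₁, ∑ j₂, (V - max (g j₁) (g j₂)) := by

  have hcard : ∀ (f : Fin m → ℝ) (y : ℝ),
      ((Finset.univ.filter (fun j => f j ≤ y)).card : ℝ) = ∑ j, chi (f j) y := by
    intro f y
    rw [Finset.card_filter]
    push_cast
    simp [chi]
  have hsq : ∀ y, (P y - Q y) ^ 2
      = (1/(m:ℝ)^2) * ∑ j₁, ∑ j₂,
          ((chi (e j₁) y - chi (g j₁) y) * (chi (e j₂) y - chi (g j₂) y)) := by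
    intro y
    rw [hP y, hQ y, hcard, hcard, div_sub_div_same, ← Finset.sum_sub_distrib, div_pow,
      pow_two, Finset.sum_mul_sum]
    ring
  have hexp : ∀ (j₁ j₂ : Fin m) (y : ℝ),
      (chi (e j₁) y - chi (g j₁) y) * (chi (e j₂) y - chi (g j₂) y)
        = chi (e j₁) y * chi (e j₂) y - chi (e j₁) y * chi (g j₂) y
          - (chi (g j₁) y * chi (e j₂) y - chi (g j₁) y * chi (g j₂) y) := by
    intro _ _ _; ring
  have I2 : ∀ a b c d : ℝ, IntegrableOn
      (fun y => chi a y * chi b y - chi c y * chi d y) (Set.Iic V) :=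
    fun a b c d => (intble V a b).sub (intble V c d)
  have I4 : ∀ a b c d a' b' c' d' : ℝ, IntegrableOn
      (fun y => chi a y * chi b y - chi c y * chi d y
        - (chi a' y * chi b' y - chi c' y * chi d' y)) (Set.Iic V) :=
    fun a b c d a' b' c' d' => (I2 a b c d).sub (I2 a' b' c' d')
  have hint : ∀ (j₁ j₂ : Fin m), IntegrableOn
      (fun y => (chi (e j₁) y - chi (g j₁) y) * (chi (e j₂) y - chi (g j₂) y))
      (Set.Iic V) := by
    intro j₁ j₂
    simp only [hexp]
    exact I4 _ _ _ _ _ _ _ _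
  have key : ∀ j₁ j₂ : Fin m,
      (∫ y in Set.Iic V, (chi (e j₁) y - chi (g j₁) y) * (chi (e j₂) y - chi (g j₂) y))
        = (V - max (e j₁) (e j₂)) - (V - max (e j₁) (g j₂))
          - ((V - max (g j₁) (e j₂)) - (V - max (g j₁) (g j₂))) := by
    intro j₁ j₂
    simp only [hexp]
    rw [integral_sub (I2 _ _ _ _) (I2 _ _ _ _),
      integral_sub (intble V _ _) (intble V _ _), integral_sub (intble V _ _) (intble V _ _),
      int_prod V _ _ (he _) (he _), int_prod V _ _ (he _) (hg _),
      int_prod V _ _ (hg _) (he _), int_prod V _ _ (hg _) (hg _)]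
  have hswap : ∑ j₁, ∑ j₂, max (g j₁) (e j₂)
      = ∑ j₁, ∑ j₂, max (e j₁) (g j₂) := by
    rw [Finset.sum_comm]
    simp_rw [max_comm]
  calc ∫ y in Set.Iic V, (P y - Q y) ^ 2
      = ∫ y in Set.Iic V, (1/(m:ℝ)^2) * ∑ j₁, ∑ j₂,
          ((chi (e j₁) y - chi (g j₁) y) * (chi (e j₂) y - chi (g j₂) y)) := by
        simp_rw [hsq]
    _ = (1/(m:ℝ)^2) * ∑ j₁, ∑ j₂,
          ∫ y in Set.Iic V, (chi (e j₁) y - chi (g j₁) y) * (chi (e j₂) y - chi (g j₂) y) := by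
        rw [integral_const_mul,
          integral_finset_sum _ (fun j₁ _ => integrable_finset_sum _ (fun j₂ _ => hint j₁ j₂))]
        exact congrArg _ (Finset.sum_congr rfl fun j₁ _ =>
          integral_finset_sum _ fun j₂ _ => hint j₁ j₂)
    _ = (1/(m:ℝ)^2) * ∑ j₁, ∑ j₂,
          ((V - max (e j₁) (e j₂)) - (V - max (e j₁) (g j₂))
            - ((V - max (g j₁) (e j₂)) - (V - max (g j₁) (g j₂)))) := by
        simp_rw [key]
    _ = _ := by
        simp only [Finset.sum_sub_distrib]
        rw [hswap]
        ring
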